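/- Let C_1, C_2, ... be independent Poisson random variables with C_j of mean a(d,j)/(2j), and let N_k = ∑_{j|k} 2j C_j. If α > 0 and a_k = (α+2)·∑_{j|k} a(d,j), then P[N_k > a_k] ≤ 2^{−α(2d−1)^k/(2k)}. -/

import Mathlib

open MeasureTheory ProbabilityTheory

open scoped NNReal ENNReal Nat

lemma hasSum_exp_div' (x : ℝ) : HasSum (fun n : ℕ => x ^ n / n !) (Real.exp x) := by
  rw [Real.exp_eq_exp_ℝ]
  exact NormedSpace.expSeries_div_hasSum_exp x

lemma poisson_hasSum (r : ℝ≥0) (s : ℝ) :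
    HasSum (fun n : ℕ => Real.exp (s * n) * poissonPMFReal r n)
      (Real.exp (r * (Real.exp s - 1))) := by
  have h : ∀ n : ℕ, Real.exp (s * n) * poissonPMFReal r n
      = Real.exp (-(r : ℝ)) * (((r : ℝ) * Real.exp s) ^ n / n !) := by
    intro n
    unfold poissonPMFReal
    rw [mul_comm s (n : ℝ), Real.exp_nat_mul, mul_pow]
    ring
  simp_rw [h]
  have := (hasSum_exp_div' ((r : ℝ) * Real.exp s)).mul_left (Real.exp (-(r : ℝ)))
  convert this using 1
  case e'_3 => rfl
  rw [← Real.exp_add]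
  ring_nf

lemma poisson_summable (r : ℝ≥0) (s : ℝ) :
    Summable (fun n : ℕ => Real.exp (s * n) * poissonPMFReal r n) :=
  (poisson_hasSum r s).summable

lemma integrable_exp_poissonMeasure (r : ℝ≥0) (s : ℝ) :
    Integrable (fun n : ℕ => Real.exp (s * n)) (poissonMeasure r) := by
  constructor
  · exact Measurable.aestronglyMeasurable (by fun_prop)
  · rw [hasFiniteIntegral_iff_ofReal (Filter.Eventually.of_forall fun n => Real.exp_nonneg _)]
    rw [MeasureTheory.lintegral_countable']
    have hle : ∀ n : ℕ, ENNReal.ofReal (Real.exp (s * n)) * (poissonMeasure r) {n}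
        = ENNReal.ofReal (Real.exp (s * n) * poissonPMFReal r n) := by
      intro n
      have h1 : (poissonMeasure r) {n} = ENNReal.ofReal (poissonPMFReal r n) :=
        by rw [poissonMeasure_singleton]; rfl
      rw [h1, ← ENNReal.ofReal_mul (Real.exp_nonneg _)]
    simp_rw [hle]
    rw [← ENNReal.ofReal_tsum_of_nonneg (fun n => mul_nonneg (Real.exp_nonneg _)
      poissonPMFReal_nonneg) (poisson_summable r s)]
    exact ENNReal.ofReal_lt_top

lemma poissonPMF_toReal (r : ℝ≥0) (n : ℕ) :
    ((poissonPMF r) n).toReal = poissonPMFReal r n := by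
  rw [show (poissonPMF r) n = ENNReal.ofReal (poissonPMFReal r n) from rfl,
    ENNReal.toReal_ofReal poissonPMFReal_nonneg]

lemma integral_exp_poissonMeasure (r : ℝ≥0) (s : ℝ) :
    ∫ n : ℕ, Real.exp (s * n) ∂(poissonMeasure r) = Real.exp (r * (Real.exp s - 1)) := by
  rw [integral_poissonMeasure' (integrable_exp_poissonMeasure r s)]
  have h : ∀ n : ℕ, (Real.exp (-(r : ℝ)) * (r : ℝ) ^ n / n !) • Real.exp (s * n)
      = Real.exp (s * n) * poissonPMFReal r n := by
    intro n
    rw [smul_eq_mul, mul_comm]; rfl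
  simp_rw [h]
  exact (poisson_hasSum r s).tsum_eq

lemma exp_mul_log_two_le {x : ℝ} (h0 : 0 ≤ x) (h1 : x ≤ 1) :
    Real.exp (x * Real.log 2) ≤ 1 + x := by
  have h := convexOn_exp.2 (Set.mem_univ (0:ℝ)) (Set.mem_univ (Real.log 2))
    (by linarith : (0:ℝ) ≤ 1 - x) h0 (by ring)
  simp only [smul_eq_mul, mul_zero, zero_add, Real.exp_zero, mul_one,
    Real.exp_log (by norm_num : (0:ℝ) < 2)] at h
  linarith


/-- The number `a(d,j)` of cyclically reduced words of length `j` on `2d` letters: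
`(2d−1)^j − 1 + 2d` for even `j` and `(2d−1)^j + 1` for odd `j`. -/
def adk (d j : ℕ) : ℕ := if Even j then (2 * d - 1) ^ j - 1 + 2 * d else (2 * d - 1) ^ j + 1

/-- Let `C_1, C_2, …` be independent Poisson random variables with
`C_j` of mean `a(d,j)/(2j)`, and `N_k = ∑_{j|k} 2j C_j`. If `α > 0` and
`a_k = (α+2)·∑_{j|k} a(d,j)`, then `P[N_k > a_k] ≤ 2^{−α(2d−1)^k/(2k)}`. -/
theorem CNBW_limit_tail_bound {Ω : Type*} [MeasurableSpace Ω] (μ : Measure Ω)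
    [IsProbabilityMeasure μ] (d : ℕ) (hd : 2 ≤ d) (C : ℕ → Ω → ℕ)
    (hmeas : ∀ j, Measurable (C j))
    (hindep : iIndepFun C μ)
    (hpoisson : ∀ j, 1 ≤ j →
      Measure.map (C j) μ = poissonMeasure ((adk d j : NNReal) / (2 * j)))
    (k : ℕ) (hk : 1 ≤ k) (α : ℝ) (hα : 0 < α) :
    (μ {ω | (α + 2) * ∑ j ∈ k.divisors, (adk d j : ℝ)
        < ∑ j ∈ k.divisors, (2 * j * C j ω : ℝ)}).toReal
      ≤ (2 : ℝ) ^ (-(α * ((2 * d : ℝ) - 1) ^ k / (2 * k))) := by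
  have hk0 : (0:ℝ) < k := by exact_mod_cast hk
  set L := Real.log 2 with hL_def
  have hL : (0.6931471803 : ℝ) < L := Real.log_two_gt_d9
  set t : ℝ := L / (2 * k) with ht_def
  have ht : 0 < t := div_pos (by linarith) (by positivity)
  set S := k.divisors with hS_def
  set X : ℕ → Ω → ℝ := fun j ω => 2 * j * (C j ω : ℝ) with hX
  have hXmeas : ∀ j, Measurable (X j) :=
    fun j => (measurable_from_top.comp (hmeas j)).const_mul _
  have hindepX : iIndepFun X μ :=
    hindep.comp (fun j (n : ℕ) => 2 * (j:ℝ) * n) (fun j => measurable_from_top)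
  -- per-summand rewriting
  have hrw : ∀ j, (fun ω => Real.exp (t * X j ω))
      = (fun n : ℕ => Real.exp ((2 * j * t) * n)) ∘ (C j) := by
    intro j
    ext ω
    simp only [hX, Function.comp_apply]
    congr 1
    ring
  have hint : ∀ j ∈ S, Integrable (fun ω => Real.exp (t * X j ω)) μ := by
    intro j hj
    have hj1 : 1 ≤ j := (Nat.pos_of_mem_divisors hj)
    rw [hrw j, ← integrable_map_measure (Measurable.aestronglyMeasurable (by fun_prop))
      (hmeas j).aemeasurable, hpoisson j hj1]
    exact integrable_exp_poissonMeasure _ _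
  have hmgf : ∀ j ∈ S, mgf (X j) μ t
      = Real.exp ((adk d j : ℝ) / (2 * j) * (Real.exp (2 * j * t) - 1)) := by
    intro j hj
    have hj1 : 1 ≤ j := Nat.pos_of_mem_divisors hj
    have hgmeas : Measurable fun n : ℕ => Real.exp ((2 * (j:ℝ) * t) * n) := measurable_from_top
    have e1 : mgf (X j) μ t = ∫ n : ℕ, Real.exp ((2 * (j:ℝ) * t) * n) ∂(Measure.map (C j) μ) := by
      rw [integral_map (hmeas j).aemeasurable hgmeas.aestronglyMeasurable, mgf, hrw j]
      rfl
    rw [e1, hpoisson j hj1, integral_exp_poissonMeasure]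
    congr 1
  -- Chernoff
  set A : ℝ := ∑ j ∈ S, (adk d j : ℝ) with hA_def
  have h1 : (μ {ω | (α + 2) * A < ∑ j ∈ S, (2 * j * C j ω : ℝ)}).toReal
      ≤ (μ {ω | (α + 2) * A ≤ (∑ j ∈ S, X j) ω}).toReal := by
    apply ENNReal.toReal_mono (measure_ne_top _ _)
    apply measure_mono
    intro ω hω
    simp only [Set.mem_setOf_eq, Finset.sum_apply] at *
    exact le_of_lt hω
  have h2 := measure_ge_le_exp_mul_mgf (μ := μ) (X := ∑ j ∈ S, X j) ((α + 2) * A) ht.le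
    (hindepX.integrable_exp_mul_sum hXmeas hint)
  rw [hindepX.mgf_sum hXmeas S] at h2
  have h3 : ∏ j ∈ S, mgf (X j) μ t
      = Real.exp (∑ j ∈ S, (adk d j : ℝ) / (2 * j) * (Real.exp (2 * j * t) - 1)) := by
    rw [Real.exp_sum]
    exact Finset.prod_congr rfl hmgf
  rw [h3, ← Real.exp_add] at h2
  refine le_trans (le_trans h1 h2) ?_
  -- numeric bound
  rw [Real.rpow_def_of_pos (by norm_num : (0:ℝ) < 2), ← hL_def]
  rw [Real.exp_le_exp]
  -- bound each exponent term
  have hsum_le : ∑ j ∈ S, (adk d j : ℝ) / (2 * j) * (Real.exp (2 * j * t) - 1)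
      ≤ A / (2 * k) := by
    rw [hA_def, Finset.sum_div]
    apply Finset.sum_le_sum
    intro j hj
    have hj1 : 1 ≤ j := Nat.pos_of_mem_divisors hj
    have hjk : j ≤ k := Nat.le_of_dvd (by omega) (Nat.mem_divisors.mp hj).1
    have hjR : (0:ℝ) < j := by exact_mod_cast hj1
    have hjkR : (j:ℝ) ≤ k := by exact_mod_cast hjk
    have hexp : Real.exp (2 * j * t) ≤ 1 + (j:ℝ)/k := by
      have h2jt : 2 * (j:ℝ) * t = ((j:ℝ)/k) * L := by
        rw [ht_def]; field_simp
      rw [h2jt]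
      exact exp_mul_log_two_le (by positivity) (by rw [div_le_one hk0]; exact hjkR)
    have hadkpos : (0:ℝ) ≤ (adk d j : ℝ) := Nat.cast_nonneg _
    calc (adk d j : ℝ) / (2 * j) * (Real.exp (2 * j * t) - 1)
        ≤ (adk d j : ℝ) / (2 * j) * ((j:ℝ)/k) := by
          apply mul_le_mul_of_nonneg_left _ (by positivity)
          linarith
      _ = (adk d j : ℝ) / (2 * k) := by field_simp
  -- A ≥ (2d-1)^k ≥ 0
  have hBcast : ((2 * d : ℝ) - 1) = ((2 * d - 1 : ℕ) : ℝ) := by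
    have : (1:ℕ) ≤ 2 * d := by omega
    push_cast [Nat.cast_sub this]
    ring
  have hadkk : ((2 * d - 1 : ℕ) : ℝ) ^ k ≤ (adk d k : ℝ) := by
    have h1 : (2 * d - 1) ^ k ≤ adk d k := by
      unfold adk
      split
      · have : 1 ≤ (2 * d - 1) ^ k := Nat.one_le_pow _ _ (by omega)
        omega
      · omega
    calc ((2 * d - 1 : ℕ) : ℝ) ^ k = (((2 * d - 1) ^ k : ℕ) : ℝ) := by push_cast; ring
      _ ≤ (adk d k : ℝ) := Nat.cast_le.mpr h1
  have hAk : (adk d k : ℝ) ≤ A := by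
    rw [hA_def]
    exact Finset.single_le_sum (f := fun j => (adk d j : ℝ)) (fun j _ => Nat.cast_nonneg _)
      (Nat.mem_divisors_self k (by omega))
  set B : ℝ := ((2 * d : ℝ) - 1) ^ k with hB_def
  have hBA : B ≤ A := by
    rw [hB_def, hBcast]
    exact le_trans hadkk hAk
  have hB0 : (0:ℝ) ≤ B := by
    rw [hB_def]
    apply pow_nonneg
    have : (2:ℝ) ≤ d := by exact_mod_cast hd
    linarith
  have hA0 : (0:ℝ) ≤ A := le_trans hB0 hBA
  -- final arithmetic
  have key : -t * ((α + 2) * A) + A / (2 * k) ≤ L * -(α * B / (2 * k)) := by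
    have h2k : (0:ℝ) < 2 * k := by positivity
    have hnum : A - L * ((α + 2) * A) ≤ -(α * B) * L := by
      nlinarith [mul_nonneg hα.le (mul_nonneg (by linarith : (0:ℝ) ≤ L)
        (sub_nonneg.mpr hBA)), mul_nonneg hA0 (by linarith : (0:ℝ) ≤ 2 * L - 1)]
    calc -t * ((α + 2) * A) + A / (2 * k)
        = (A - L * ((α + 2) * A)) / (2 * k) := by rw [ht_def]; field_simp; ring
      _ ≤ (-(α * B) * L) / (2 * k) := (div_le_div_iff_of_pos_right h2k).mpr hnum
      _ = L * -(α * B / (2 * k)) := by ring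
  calc -t * ((α + 2) * A) + ∑ j ∈ S, (adk d j : ℝ) / (2 * j) * (Real.exp (2 * j * t) - 1)
      ≤ -t * ((α + 2) * A) + A / (2 * k) := by linarith
    _ ≤ L * -(α * B / (2 * k)) := key
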